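/- For Z in the Siegel upper half space ℍ₂ define y₀ = θ[(0,0),(1,1)](Z)⁴, y₁ = θ[(0,0),(0,1)](Z)⁴, y₂ = θ[(0,0),(0,0)](Z)⁴, y₃ = −θ[(1,0),(0,0)](Z)⁴ − θ[(0,0),(1,1)](Z)⁴, y₄ = −θ[(1,0),(0,1)](Z)⁴ − θ[(0,0),(1,1)](Z)⁴. Then for every Z ∈ ℍ₂: 2·θ[(0,0),(0,1)](Z)²·θ[(0,0),(0,0)](Z)²·θ[(0,0),(1,0)](Z)²·θ[(0,0),(1,1)](Z)² = y₀y₁ + y₀y₂ + y₁y₂ − y₃y₄. -/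

import Mathlib

open Matrix Complex

/-- The Siegel upper half space of genus 2: symmetric complex 2×2 matrices with
positive definite imaginary part. -/
def SiegelH2 : Set (Matrix (Fin 2) (Fin 2) ℂ) :=
  {Z | Z.IsSymm ∧ (Matrix.of fun i j => (Z i j).im).PosDef}

/-- The summand of the theta series with characteristic `(a,b)`:
`exp(πi((g+a/2)ᵀ Z (g+a/2) + bᵀ(g+a/2)))`. -/
noncomputable def thetaTerm (a b : Fin 2 → ℤ) (Z : Matrix (Fin 2) (Fin 2) ℂ)
    (g : Fin 2 → ℤ) : ℂ :=
  Complex.exp (Real.pi * Complex.I *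
    ((∑ i, ∑ j, ((g i : ℂ) + (a i : ℂ) / 2) * Z i j * ((g j : ℂ) + (a j : ℂ) / 2)) +
      ∑ i, (b i : ℂ) * ((g i : ℂ) + (a i : ℂ) / 2)))

/-- The theta constant `θ[a,b](Z) = Σ_{g∈ℤ²} exp(πi((g+a/2)ᵀ Z (g+a/2) + bᵀ(g+a/2)))`. -/
noncomputable def theta (a b : Fin 2 → ℤ) (Z : Matrix (Fin 2) (Fin 2) ℂ) : ℂ :=
  ∑' g : Fin 2 → ℤ, thetaTerm a b Z g

/-- The modular forms `y₀,…,y₄` of Igusa. -/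
noncomputable def yg (Z : Matrix (Fin 2) (Fin 2) ℂ) : Fin 5 → ℂ :=
  ![theta ![0, 0] ![1, 1] Z ^ 4,
    theta ![0, 0] ![0, 1] Z ^ 4,
    theta ![0, 0] ![0, 0] Z ^ 4,
    -theta ![1, 0] ![0, 0] Z ^ 4 - theta ![0, 0] ![1, 1] Z ^ 4,
    -theta ![1, 0] ![0, 1] Z ^ 4 - theta ![0, 0] ![1, 1] Z ^ 4]

/-- 1-d Gaussian summability over ℤ. -/
lemma summable_exp_neg_sq {c : ℝ} (hc : 0 < c) :
    Summable fun n : ℤ => Real.exp (-c * (n : ℝ) ^ 2) := by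
  have hτ : 0 < (Complex.I * (c / Real.pi)).im := by
    simp [Complex.mul_im, div_pos hc Real.pi_pos]
  have h := (summable_jacobiTheta₂_term_iff 0 (Complex.I * (c / Real.pi))).mpr hτ
  rw [← Complex.summable_ofReal]
  convert h using 2 with n
  rw [jacobiTheta₂_term]
  have hπ : (Real.pi : ℂ) ≠ 0 := by exact_mod_cast Real.pi_ne_zero
  have harg : (2 * (Real.pi:ℂ) * Complex.I * n * 0 +
      (Real.pi:ℂ) * Complex.I * (n:ℂ) ^ 2 * (Complex.I * ((c:ℂ) / (Real.pi:ℂ))))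
      = ((-c * (n : ℝ) ^ 2 : ℝ) : ℂ) := by
    push_cast
    field_simp
    ring_nf
    rw [Complex.I_sq]
    ring
  rw [harg, ← Complex.ofReal_exp]

/-- positivity data for the imaginary part -/
lemma im_quad_lower_bound {Z : Matrix (Fin 2) (Fin 2) ℂ} (hZ : Z ∈ SiegelH2) :
    ∃ c : ℝ, 0 < c ∧ ∀ x0 x1 : ℝ,
      c * (x0 ^ 2 + x1 ^ 2) ≤
        x0 * (Z 0 0).im * x0 + x0 * (Z 0 1).im * x1 + x1 * (Z 1 0).im * x0 +
          x1 * (Z 1 1).im * x1 := by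
  obtain ⟨hsym, hpd⟩ := hZ
  set p := (Z 0 0).im
  set q := (Z 1 1).im
  set r := (Z 0 1).im
  have hr : (Z 1 0).im = r := congrArg Complex.im (hsym.apply 0 1)
  have hp : 0 < p := by
    have := hpd.dotProduct_mulVec_pos (x := ![1, 0]) (by
      intro h
      have := congrFun h 0
      simp at this)
    simpa [Matrix.mulVec, dotProduct, Fin.sum_univ_two] using this
  have hq : 0 < q := by
    have := hpd.dotProduct_mulVec_pos (x := ![0, 1]) (by
      intro h
      have := congrFun h 1
      simp at this)
    simpa [Matrix.mulVec, dotProduct, Fin.sum_univ_two] using this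
  have hdet : 0 < p * q - r * r := by
    have := hpd.det_pos
    rw [Matrix.det_fin_two] at this
    simpa [hr, mul_comm] using this
  refine ⟨(p * q - r * r) / (p + q), div_pos hdet (by linarith), fun x0 x1 => ?_⟩
  rw [div_mul_eq_mul_div, div_le_iff₀ (by linarith)]
  rw [hr]
  nlinarith [sq_nonneg (x0 * p + x1 * r), sq_nonneg (x0 * r + x1 * q)]

lemma norm_thetaTerm (a b : Fin 2 → ℤ) (Z : Matrix (Fin 2) (Fin 2) ℂ) (g : Fin 2 → ℤ) :
    ‖thetaTerm a b Z g‖ =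
      Real.exp (-Real.pi *
        (((g 0 : ℝ) + a 0 / 2) * (Z 0 0).im * ((g 0 : ℝ) + a 0 / 2) +
          ((g 0 : ℝ) + a 0 / 2) * (Z 0 1).im * ((g 1 : ℝ) + a 1 / 2) +
          ((g 1 : ℝ) + a 1 / 2) * (Z 1 0).im * ((g 0 : ℝ) + a 0 / 2) +
          ((g 1 : ℝ) + a 1 / 2) * (Z 1 1).im * ((g 1 : ℝ) + a 1 / 2))) := by
  rw [thetaTerm, Complex.norm_exp]
  congr 1
  have hx : ∀ i, ((g i : ℂ) + (a i : ℂ) / 2) = (((g i : ℝ) + (a i : ℝ) / 2 : ℝ) : ℂ) := by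
    intro i; push_cast; ring
  simp only [Fin.sum_univ_two, hx]
  simp only [Complex.mul_re, Complex.mul_im, Complex.add_re, Complex.add_im,
    Complex.ofReal_re, Complex.ofReal_im, Complex.I_re, Complex.I_im,
    Complex.intCast_re, Complex.intCast_im]
  ring

set_option maxHeartbeats 1000000 in
lemma summable_norm_thetaTerm {Z : Matrix (Fin 2) (Fin 2) ℂ} (hZ : Z ∈ SiegelH2)
    (a b : Fin 2 → ℤ) (ha : ∀ i, a i = 0 ∨ a i = 1) :
    Summable fun g : Fin 2 → ℤ => ‖thetaTerm a b Z g‖ := by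
  obtain ⟨c, hc, hbound⟩ := im_quad_lower_bound hZ
  set c' : ℝ := Real.pi * c / 4 with hc'def
  have hc' : 0 < c' := by positivity
  have key : ∀ g : Fin 2 → ℤ, ‖thetaTerm a b Z g‖ ≤
      Real.exp (-c' * (g 0 : ℝ) ^ 2) * Real.exp (-c' * (g 1 : ℝ) ^ 2) := by
    intro g
    rw [norm_thetaTerm, ← Real.exp_add]
    apply Real.exp_le_exp.mpr
    have hy : ∀ i, ((g i : ℝ) ^ 2) / 4 ≤ ((g i : ℝ) + a i / 2) ^ 2 := by
      intro i
      have hint : (0 : ℝ) ≤ (g i : ℝ) ∨ (g i : ℝ) ≤ -1 := by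
        rcases le_or_gt 0 (g i) with h | h
        · left; exact_mod_cast h
        · right; exact_mod_cast (by omega : g i ≤ -1)
      rcases ha i with h0 | h1
      · rw [h0]; push_cast; nlinarith [sq_nonneg ((g i : ℝ))]
      · rw [h1]; push_cast
        rcases hint with h | h <;> nlinarith
    have hb := hbound ((g 0 : ℝ) + a 0 / 2) ((g 1 : ℝ) + a 1 / 2)
    have hs2 : (g 0 : ℝ) ^ 2 / 4 + (g 1 : ℝ) ^ 2 / 4 ≤
        ((g 0 : ℝ) + a 0 / 2) ^ 2 + ((g 1 : ℝ) + a 1 / 2) ^ 2 := add_le_add (hy 0) (hy 1)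
    have hπ := Real.pi_pos
    have s1 := mul_le_mul_of_nonneg_left hb hπ.le
    have s3 := mul_le_mul_of_nonneg_left hs2 (mul_pos hπ hc).le
    simp only [hc'def]
    linarith
  have base : Summable fun p : ℤ × ℤ =>
      Real.exp (-c' * (p.1 : ℝ) ^ 2) * Real.exp (-c' * (p.2 : ℝ) ^ 2) :=
    (summable_exp_neg_sq hc').mul_of_nonneg (summable_exp_neg_sq hc')
      (fun _ => Real.exp_nonneg _) (fun _ => Real.exp_nonneg _)
  have maj : Summable fun g : Fin 2 → ℤ =>
      Real.exp (-c' * (g 0 : ℝ) ^ 2) * Real.exp (-c' * (g 1 : ℝ) ^ 2) := by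
    rw [← (finTwoArrowEquiv ℤ).symm.summable_iff]
    refine base.congr fun p => ?_
    simp [finTwoArrowEquiv]
  exact Summable.of_nonneg_of_le (fun g => norm_nonneg _) key maj

def cv (s : Bool × Bool) : Fin 2 → ℤ := ![if s.1 then 1 else 0, if s.2 then 1 else 0]

def cosetEquiv : (Bool × Bool) × ((Fin 2 → ℤ) × (Fin 2 → ℤ)) ≃ ((Fin 2 → ℤ) × (Fin 2 → ℤ)) where
  toFun q := (q.2.1 + q.2.2 + cv q.1, q.2.1 - q.2.2)
  invFun p := (((p.1 0 + p.2 0) % 2 == 1, (p.1 1 + p.2 1) % 2 == 1),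
    (fun i => (p.1 i + p.2 i) / 2, fun i => (p.1 i + p.2 i) / 2 - p.2 i))
  left_inv := by
    rintro ⟨⟨s1, s2⟩, m, n⟩
    simp only [Prod.mk.injEq, Pi.add_apply, Pi.sub_apply]
    refine ⟨⟨?_, ?_⟩, funext fun i => ?_, funext fun i => ?_⟩
    · cases s1 <;> simp [cv] <;> omega
    · cases s2 <;> simp [cv] <;> omega
    · fin_cases i <;> cases s1 <;> cases s2 <;> simp [cv] <;> omega
    · fin_cases i <;> cases s1 <;> cases s2 <;> simp [cv] <;> omega
  right_inv := by
    rintro ⟨g, h⟩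
    simp only [Prod.mk.injEq]
    constructor <;> funext i <;> fin_cases i <;>
      simp only [Pi.add_apply, Pi.sub_apply, cv, Matrix.cons_val_zero, Matrix.cons_val_one,
        Matrix.head_cons] <;>
      first
      | omega
      | (rcases Int.emod_two_eq (g 0 + h 0) with hp | hp <;> simp [hp] <;> omega)
      | (rcases Int.emod_two_eq (g 1 + h 1) with hp | hp <;> simp [hp] <;> omega)

lemma term_identity (Z : Matrix (Fin 2) (Fin 2) ℂ)
    (a b c a' d : Fin 2 → ℤ) (h : ∀ i, a i + c i = a' i + 2 * d i) (m n : Fin 2 → ℤ) :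
    thetaTerm a b Z (m + n + c) * thetaTerm a b Z (m - n) =
      Complex.exp (Real.pi * Complex.I * ((∑ i, b i * (a i + c i) : ℤ) : ℂ)) *
        (thetaTerm a' ![0, 0] ((2 : ℂ) • Z) (m + d) * thetaTerm c ![0, 0] ((2 : ℂ) • Z) n) := by
  have ha'0 : ((a' 0 : ℤ) : ℂ) = (a 0 : ℂ) + (c 0 : ℂ) - 2 * (d 0 : ℂ) := by
    exact_mod_cast congrArg (fun x : ℤ => (x : ℂ)) (by have := h 0; omega : a' 0 = a 0 + c 0 - 2 * d 0)
  have ha'1 : ((a' 1 : ℤ) : ℂ) = (a 1 : ℂ) + (c 1 : ℂ) - 2 * (d 1 : ℂ) := by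
    exact_mod_cast congrArg (fun x : ℤ => (x : ℂ)) (by have := h 1; omega : a' 1 = a 1 + c 1 - 2 * d 1)
  rw [thetaTerm, thetaTerm, thetaTerm, thetaTerm, ← Complex.exp_add, ← Complex.exp_add,
    ← Complex.exp_add]
  rw [Complex.exp_eq_exp_iff_exists_int]
  refine ⟨∑ i, b i * m i, ?_⟩
  simp only [Fin.sum_univ_two, Pi.add_apply, Pi.sub_apply, Matrix.smul_apply, smul_eq_mul,
    Matrix.cons_val_zero, Matrix.cons_val_one, Matrix.head_cons, Int.cast_zero]
  push_cast
  rw [ha'0, ha'1]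
  ring

lemma smul_two_mem_SiegelH2 {Z : Matrix (Fin 2) (Fin 2) ℂ} (hZ : Z ∈ SiegelH2) :
    (2 : ℂ) • Z ∈ SiegelH2 := by
  obtain ⟨hsym, hpd⟩ := hZ
  have hM : (Matrix.of fun i j => (((2 : ℂ) • Z) i j).im) =
      (2 : ℝ) • (Matrix.of fun i j => (Z i j).im) := by
    ext i j
    simp [Matrix.smul_apply, Complex.mul_im]
  refine ⟨?_, ?_⟩
  · show ((2 : ℂ) • Z)ᵀ = (2 : ℂ) • Z
    rw [Matrix.transpose_smul, hsym.eq]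
  · rw [hM]
    refine Matrix.PosDef.of_dotProduct_mulVec_pos ?_ ?_
    · show ((2 : ℝ) • (Matrix.of fun i j => (Z i j).im))ᴴ = _
      rw [Matrix.conjTranspose_smul, hpd.1]
      simp
    · intro x hx
      have h2 := hpd.dotProduct_mulVec_pos hx
      have : star x ⬝ᵥ ((2 : ℝ) • (Matrix.of fun i j => (Z i j).im)) *ᵥ x =
          2 * (star x ⬝ᵥ (Matrix.of fun i j => (Z i j).im) *ᵥ x) := by
        rw [Matrix.smul_mulVec, dotProduct_smul, smul_eq_mul]
      rw [this]
      linarith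

set_option maxHeartbeats 2000000 in
lemma theta_sq_expand {Z : Matrix (Fin 2) (Fin 2) ℂ} (hZ : Z ∈ SiegelH2)
    (a b : Fin 2 → ℤ) (ha : ∀ i, a i = 0 ∨ a i = 1) :
    theta a b Z ^ 2 =
      ∑ s : Bool × Bool,
        Complex.exp (Real.pi * Complex.I * ((∑ i, b i * (a i + cv s i) : ℤ) : ℂ)) *
          (theta (fun i => (a i + cv s i) % 2) ![0, 0] ((2 : ℂ) • Z) *
            theta (cv s) ![0, 0] ((2 : ℂ) • Z)) := by
  classical
  have hW := smul_two_mem_SiegelH2 hZ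
  have hS := summable_norm_thetaTerm hZ a b ha
  set f := thetaTerm a b Z with hf
  have hpair : Summable fun p : (Fin 2 → ℤ) × (Fin 2 → ℤ) => f p.1 * f p.2 :=
    (hS.mul_norm hS).of_norm
  have step1 : theta a b Z ^ 2 = ∑' p : (Fin 2 → ℤ) × (Fin 2 → ℤ), f p.1 * f p.2 := by
    rw [sq, theta, tsum_mul_tsum_of_summable_norm hS hS]
  have hcomp : Summable fun q : (Bool × Bool) × ((Fin 2 → ℤ) × (Fin 2 → ℤ)) =>
      f (cosetEquiv q).1 * f (cosetEquiv q).2 :=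
    by exact
      (cosetEquiv.summable_iff (f := fun p : (Fin 2 → ℤ) × (Fin 2 → ℤ) => f p.1 * f p.2)).mpr hpair
  have step2 : (∑' p : (Fin 2 → ℤ) × (Fin 2 → ℤ), f p.1 * f p.2) =
      ∑' q : (Bool × Bool) × ((Fin 2 → ℤ) × (Fin 2 → ℤ)),
        f (cosetEquiv q).1 * f (cosetEquiv q).2 :=
    (cosetEquiv.tsum_eq fun p => f p.1 * f p.2).symm
  rw [step1, step2, Summable.tsum_prod' hcomp (fun s => hcomp.prod_factor s), tsum_fintype]
  refine Finset.sum_congr rfl fun s _ => ?_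
  -- now the inner sum for a fixed coset s
  set c : Fin 2 → ℤ := cv s with hc
  set a' : Fin 2 → ℤ := fun i => (a i + c i) % 2 with ha'
  set d : Fin 2 → ℤ := fun i => (a i + c i) / 2 with hd
  have hdecomp : ∀ i, a i + c i = a' i + 2 * d i := fun i => (Int.emod_add_mul_ediv (a i + c i) 2).symm
  have ha'01 : ∀ i, a' i = 0 ∨ a' i = 1 := fun i => Int.emod_two_eq (a i + c i)
  have hc01 : ∀ i, c i = 0 ∨ c i = 1 := by
    intro i
    fin_cases i <;> rcases s with ⟨s1, s2⟩ <;> cases s1 <;> cases s2 <;> simp [hc, cv]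
  have hT1 : Summable fun g : Fin 2 → ℤ => ‖thetaTerm a' ![0, 0] ((2 : ℂ) • Z) g‖ :=
    summable_norm_thetaTerm hW a' ![0, 0] ha'01
  have hT2 : Summable fun g : Fin 2 → ℤ => ‖thetaTerm c ![0, 0] ((2 : ℂ) • Z) g‖ :=
    summable_norm_thetaTerm hW c ![0, 0] hc01
  have hT1' : Summable fun g : Fin 2 → ℤ => ‖thetaTerm a' ![0, 0] ((2 : ℂ) • Z) (g + d)‖ := by
    rw [← (Equiv.addRight d).summable_iff
      (f := fun g : Fin 2 → ℤ => ‖thetaTerm a' ![0, 0] ((2 : ℂ) • Z) g‖)] at hT1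
    exact hT1
  have hinner : ∀ p : (Fin 2 → ℤ) × (Fin 2 → ℤ),
      f (cosetEquiv (s, p)).1 * f (cosetEquiv (s, p)).2 =
        Complex.exp (Real.pi * Complex.I * ((∑ i, b i * (a i + c i) : ℤ) : ℂ)) *
          (thetaTerm a' ![0, 0] ((2 : ℂ) • Z) (p.1 + d) *
            thetaTerm c ![0, 0] ((2 : ℂ) • Z) p.2) := by
    rintro ⟨m, n⟩
    show f (m + n + c) * f (m - n) = _
    rw [hf]
    exact term_identity Z a b c a' d hdecomp m n
  calc (∑' p : (Fin 2 → ℤ) × (Fin 2 → ℤ), f (cosetEquiv (s, p)).1 * f (cosetEquiv (s, p)).2)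
      = ∑' p : (Fin 2 → ℤ) × (Fin 2 → ℤ),
          Complex.exp (Real.pi * Complex.I * ((∑ i, b i * (a i + c i) : ℤ) : ℂ)) *
            (thetaTerm a' ![0, 0] ((2 : ℂ) • Z) (p.1 + d) *
              thetaTerm c ![0, 0] ((2 : ℂ) • Z) p.2) := tsum_congr hinner
    _ = Complex.exp (Real.pi * Complex.I * ((∑ i, b i * (a i + c i) : ℤ) : ℂ)) *
          ∑' p : (Fin 2 → ℤ) × (Fin 2 → ℤ),
            thetaTerm a' ![0, 0] ((2 : ℂ) • Z) (p.1 + d) *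
              thetaTerm c ![0, 0] ((2 : ℂ) • Z) p.2 := tsum_mul_left
    _ = Complex.exp (Real.pi * Complex.I * ((∑ i, b i * (a i + c i) : ℤ) : ℂ)) *
          ((∑' g : Fin 2 → ℤ, thetaTerm a' ![0, 0] ((2 : ℂ) • Z) (g + d)) *
            ∑' g : Fin 2 → ℤ, thetaTerm c ![0, 0] ((2 : ℂ) • Z) g) := by
        rw [← tsum_mul_tsum_of_summable_norm hT1' hT2]
    _ = Complex.exp (Real.pi * Complex.I * ((∑ i, b i * (a i + c i) : ℤ) : ℂ)) *
          (theta a' ![0, 0] ((2 : ℂ) • Z) * theta c ![0, 0] ((2 : ℂ) • Z)) := by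
        rw [theta, theta]
        congr 2
        exact (Equiv.addRight d).tsum_eq (thetaTerm a' ![0, 0] ((2 : ℂ) • Z))

lemma vec_ext {v w : Fin 2 → ℤ} (h0 : v 0 = w 0) (h1 : v 1 = w 1) : v = w :=
  funext fun i => by fin_cases i <;> assumption


lemma thA {Z : Matrix (Fin 2) (Fin 2) ℂ} (hZ : Z ∈ SiegelH2) :
    theta ![0, 0] ![0, 0] Z ^ 2 = theta ![0, 0] ![0, 0] ((2 : ℂ) • Z) ^ 2 + theta ![0, 1] ![0, 0] ((2 : ℂ) • Z) ^ 2 + theta ![1, 0] ![0, 0] ((2 : ℂ) • Z) ^ 2 + theta ![1, 1] ![0, 0] ((2 : ℂ) • Z) ^ 2 := by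
  rw [theta_sq_expand hZ _ _ (by intro i; fin_cases i <;> simp)]
  rw [Fintype.sum_prod_type]
  simp only [Fintype.sum_bool]
  have ett : (fun i => ((![0, 0] : Fin 2 → ℤ) i + cv (true, true) i) % 2) = ![1, 1] :=
    vec_ext (by simp [cv]) (by simp [cv])
  have etf : (fun i => ((![0, 0] : Fin 2 → ℤ) i + cv (true, false) i) % 2) = ![1, 0] :=
    vec_ext (by simp [cv]) (by simp [cv])
  have eft : (fun i => ((![0, 0] : Fin 2 → ℤ) i + cv (false, true) i) % 2) = ![0, 1] :=
    vec_ext (by simp [cv]) (by simp [cv])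
  have eff : (fun i => ((![0, 0] : Fin 2 → ℤ) i + cv (false, false) i) % 2) = ![0, 0] :=
    vec_ext (by simp [cv]) (by simp [cv])
  have ctt : cv (true, true) = ![1, 1] := vec_ext (by simp [cv]) (by simp [cv])
  have ctf : cv (true, false) = ![1, 0] := vec_ext (by simp [cv]) (by simp [cv])
  have cft : cv (false, true) = ![0, 1] := vec_ext (by simp [cv]) (by simp [cv])
  have cff : cv (false, false) = ![0, 0] := vec_ext (by simp [cv]) (by simp [cv])
  have h2pi : Complex.exp ((Real.pi : ℂ) * Complex.I * 2) = 1 := by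
    rw [show ((Real.pi : ℂ) * Complex.I * 2) = 2 * (Real.pi : ℂ) * Complex.I by ring,
      Complex.exp_two_pi_mul_I]
  rw [ett, etf, eft, eff, ctt, ctf, cft, cff]
  norm_num [cv, Fin.sum_univ_two, Complex.exp_pi_mul_I, h2pi]
  ring

lemma thB {Z : Matrix (Fin 2) (Fin 2) ℂ} (hZ : Z ∈ SiegelH2) :
    theta ![0, 0] ![0, 1] Z ^ 2 = theta ![0, 0] ![0, 0] ((2 : ℂ) • Z) ^ 2 - theta ![0, 1] ![0, 0] ((2 : ℂ) • Z) ^ 2 + theta ![1, 0] ![0, 0] ((2 : ℂ) • Z) ^ 2 - theta ![1, 1] ![0, 0] ((2 : ℂ) • Z) ^ 2 := by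
  rw [theta_sq_expand hZ _ _ (by intro i; fin_cases i <;> simp)]
  rw [Fintype.sum_prod_type]
  simp only [Fintype.sum_bool]
  have ett : (fun i => ((![0, 0] : Fin 2 → ℤ) i + cv (true, true) i) % 2) = ![1, 1] :=
    vec_ext (by simp [cv]) (by simp [cv])
  have etf : (fun i => ((![0, 0] : Fin 2 → ℤ) i + cv (true, false) i) % 2) = ![1, 0] :=
    vec_ext (by simp [cv]) (by simp [cv])
  have eft : (fun i => ((![0, 0] : Fin 2 → ℤ) i + cv (false, true) i) % 2) = ![0, 1] :=
    vec_ext (by simp [cv]) (by simp [cv])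
  have eff : (fun i => ((![0, 0] : Fin 2 → ℤ) i + cv (false, false) i) % 2) = ![0, 0] :=
    vec_ext (by simp [cv]) (by simp [cv])
  have ctt : cv (true, true) = ![1, 1] := vec_ext (by simp [cv]) (by simp [cv])
  have ctf : cv (true, false) = ![1, 0] := vec_ext (by simp [cv]) (by simp [cv])
  have cft : cv (false, true) = ![0, 1] := vec_ext (by simp [cv]) (by simp [cv])
  have cff : cv (false, false) = ![0, 0] := vec_ext (by simp [cv]) (by simp [cv])
  have h2pi : Complex.exp ((Real.pi : ℂ) * Complex.I * 2) = 1 := by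
    rw [show ((Real.pi : ℂ) * Complex.I * 2) = 2 * (Real.pi : ℂ) * Complex.I by ring,
      Complex.exp_two_pi_mul_I]
  rw [ett, etf, eft, eff, ctt, ctf, cft, cff]
  norm_num [cv, Fin.sum_univ_two, Complex.exp_pi_mul_I, h2pi]
  ring

lemma thC {Z : Matrix (Fin 2) (Fin 2) ℂ} (hZ : Z ∈ SiegelH2) :
    theta ![0, 0] ![1, 0] Z ^ 2 = theta ![0, 0] ![0, 0] ((2 : ℂ) • Z) ^ 2 + theta ![0, 1] ![0, 0] ((2 : ℂ) • Z) ^ 2 - theta ![1, 0] ![0, 0] ((2 : ℂ) • Z) ^ 2 - theta ![1, 1] ![0, 0] ((2 : ℂ) • Z) ^ 2 := by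
  rw [theta_sq_expand hZ _ _ (by intro i; fin_cases i <;> simp)]
  rw [Fintype.sum_prod_type]
  simp only [Fintype.sum_bool]
  have ett : (fun i => ((![0, 0] : Fin 2 → ℤ) i + cv (true, true) i) % 2) = ![1, 1] :=
    vec_ext (by simp [cv]) (by simp [cv])
  have etf : (fun i => ((![0, 0] : Fin 2 → ℤ) i + cv (true, false) i) % 2) = ![1, 0] :=
    vec_ext (by simp [cv]) (by simp [cv])
  have eft : (fun i => ((![0, 0] : Fin 2 → ℤ) i + cv (false, true) i) % 2) = ![0, 1] :=
    vec_ext (by simp [cv]) (by simp [cv])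
  have eff : (fun i => ((![0, 0] : Fin 2 → ℤ) i + cv (false, false) i) % 2) = ![0, 0] :=
    vec_ext (by simp [cv]) (by simp [cv])
  have ctt : cv (true, true) = ![1, 1] := vec_ext (by simp [cv]) (by simp [cv])
  have ctf : cv (true, false) = ![1, 0] := vec_ext (by simp [cv]) (by simp [cv])
  have cft : cv (false, true) = ![0, 1] := vec_ext (by simp [cv]) (by simp [cv])
  have cff : cv (false, false) = ![0, 0] := vec_ext (by simp [cv]) (by simp [cv])
  have h2pi : Complex.exp ((Real.pi : ℂ) * Complex.I * 2) = 1 := by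
    rw [show ((Real.pi : ℂ) * Complex.I * 2) = 2 * (Real.pi : ℂ) * Complex.I by ring,
      Complex.exp_two_pi_mul_I]
  rw [ett, etf, eft, eff, ctt, ctf, cft, cff]
  norm_num [cv, Fin.sum_univ_two, Complex.exp_pi_mul_I, h2pi]
  ring

lemma thD {Z : Matrix (Fin 2) (Fin 2) ℂ} (hZ : Z ∈ SiegelH2) :
    theta ![0, 0] ![1, 1] Z ^ 2 = theta ![0, 0] ![0, 0] ((2 : ℂ) • Z) ^ 2 - theta ![0, 1] ![0, 0] ((2 : ℂ) • Z) ^ 2 - theta ![1, 0] ![0, 0] ((2 : ℂ) • Z) ^ 2 + theta ![1, 1] ![0, 0] ((2 : ℂ) • Z) ^ 2 := by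
  rw [theta_sq_expand hZ _ _ (by intro i; fin_cases i <;> simp)]
  rw [Fintype.sum_prod_type]
  simp only [Fintype.sum_bool]
  have ett : (fun i => ((![0, 0] : Fin 2 → ℤ) i + cv (true, true) i) % 2) = ![1, 1] :=
    vec_ext (by simp [cv]) (by simp [cv])
  have etf : (fun i => ((![0, 0] : Fin 2 → ℤ) i + cv (true, false) i) % 2) = ![1, 0] :=
    vec_ext (by simp [cv]) (by simp [cv])
  have eft : (fun i => ((![0, 0] : Fin 2 → ℤ) i + cv (false, true) i) % 2) = ![0, 1] :=
    vec_ext (by simp [cv]) (by simp [cv])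
  have eff : (fun i => ((![0, 0] : Fin 2 → ℤ) i + cv (false, false) i) % 2) = ![0, 0] :=
    vec_ext (by simp [cv]) (by simp [cv])
  have ctt : cv (true, true) = ![1, 1] := vec_ext (by simp [cv]) (by simp [cv])
  have ctf : cv (true, false) = ![1, 0] := vec_ext (by simp [cv]) (by simp [cv])
  have cft : cv (false, true) = ![0, 1] := vec_ext (by simp [cv]) (by simp [cv])
  have cff : cv (false, false) = ![0, 0] := vec_ext (by simp [cv]) (by simp [cv])
  have h2pi : Complex.exp ((Real.pi : ℂ) * Complex.I * 2) = 1 := by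
    rw [show ((Real.pi : ℂ) * Complex.I * 2) = 2 * (Real.pi : ℂ) * Complex.I by ring,
      Complex.exp_two_pi_mul_I]
  rw [ett, etf, eft, eff, ctt, ctf, cft, cff]
  norm_num [cv, Fin.sum_univ_two, Complex.exp_pi_mul_I, h2pi]
  ring

lemma thP {Z : Matrix (Fin 2) (Fin 2) ℂ} (hZ : Z ∈ SiegelH2) :
    theta ![1, 0] ![0, 0] Z ^ 2 = 2 * (theta ![0, 0] ![0, 0] ((2 : ℂ) • Z) * theta ![1, 0] ![0, 0] ((2 : ℂ) • Z)) + 2 * (theta ![0, 1] ![0, 0] ((2 : ℂ) • Z) * theta ![1, 1] ![0, 0] ((2 : ℂ) • Z)) := by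
  rw [theta_sq_expand hZ _ _ (by intro i; fin_cases i <;> simp)]
  rw [Fintype.sum_prod_type]
  simp only [Fintype.sum_bool]
  have ett : (fun i => ((![1, 0] : Fin 2 → ℤ) i + cv (true, true) i) % 2) = ![0, 1] :=
    vec_ext (by simp [cv]) (by simp [cv])
  have etf : (fun i => ((![1, 0] : Fin 2 → ℤ) i + cv (true, false) i) % 2) = ![0, 0] :=
    vec_ext (by simp [cv]) (by simp [cv])
  have eft : (fun i => ((![1, 0] : Fin 2 → ℤ) i + cv (false, true) i) % 2) = ![1, 1] :=
    vec_ext (by simp [cv]) (by simp [cv])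
  have eff : (fun i => ((![1, 0] : Fin 2 → ℤ) i + cv (false, false) i) % 2) = ![1, 0] :=
    vec_ext (by simp [cv]) (by simp [cv])
  have ctt : cv (true, true) = ![1, 1] := vec_ext (by simp [cv]) (by simp [cv])
  have ctf : cv (true, false) = ![1, 0] := vec_ext (by simp [cv]) (by simp [cv])
  have cft : cv (false, true) = ![0, 1] := vec_ext (by simp [cv]) (by simp [cv])
  have cff : cv (false, false) = ![0, 0] := vec_ext (by simp [cv]) (by simp [cv])
  have h2pi : Complex.exp ((Real.pi : ℂ) * Complex.I * 2) = 1 := by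
    rw [show ((Real.pi : ℂ) * Complex.I * 2) = 2 * (Real.pi : ℂ) * Complex.I by ring,
      Complex.exp_two_pi_mul_I]
  rw [ett, etf, eft, eff, ctt, ctf, cft, cff]
  norm_num [cv, Fin.sum_univ_two, Complex.exp_pi_mul_I, h2pi]
  ring

lemma thQ {Z : Matrix (Fin 2) (Fin 2) ℂ} (hZ : Z ∈ SiegelH2) :
    theta ![1, 0] ![0, 1] Z ^ 2 = 2 * (theta ![0, 0] ![0, 0] ((2 : ℂ) • Z) * theta ![1, 0] ![0, 0] ((2 : ℂ) • Z)) - 2 * (theta ![0, 1] ![0, 0] ((2 : ℂ) • Z) * theta ![1, 1] ![0, 0] ((2 : ℂ) • Z)) := by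
  rw [theta_sq_expand hZ _ _ (by intro i; fin_cases i <;> simp)]
  rw [Fintype.sum_prod_type]
  simp only [Fintype.sum_bool]
  have ett : (fun i => ((![1, 0] : Fin 2 → ℤ) i + cv (true, true) i) % 2) = ![0, 1] :=
    vec_ext (by simp [cv]) (by simp [cv])
  have etf : (fun i => ((![1, 0] : Fin 2 → ℤ) i + cv (true, false) i) % 2) = ![0, 0] :=
    vec_ext (by simp [cv]) (by simp [cv])
  have eft : (fun i => ((![1, 0] : Fin 2 → ℤ) i + cv (false, true) i) % 2) = ![1, 1] :=
    vec_ext (by simp [cv]) (by simp [cv])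
  have eff : (fun i => ((![1, 0] : Fin 2 → ℤ) i + cv (false, false) i) % 2) = ![1, 0] :=
    vec_ext (by simp [cv]) (by simp [cv])
  have ctt : cv (true, true) = ![1, 1] := vec_ext (by simp [cv]) (by simp [cv])
  have ctf : cv (true, false) = ![1, 0] := vec_ext (by simp [cv]) (by simp [cv])
  have cft : cv (false, true) = ![0, 1] := vec_ext (by simp [cv]) (by simp [cv])
  have cff : cv (false, false) = ![0, 0] := vec_ext (by simp [cv]) (by simp [cv])
  have h2pi : Complex.exp ((Real.pi : ℂ) * Complex.I * 2) = 1 := by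
    rw [show ((Real.pi : ℂ) * Complex.I * 2) = 2 * (Real.pi : ℂ) * Complex.I by ring,
      Complex.exp_two_pi_mul_I]
  rw [ett, etf, eft, eff, ctt, ctf, cft, cff]
  norm_num [cv, Fin.sum_univ_two, Complex.exp_pi_mul_I, h2pi]
  ring


/-- Igusa's relation: twice the square of the product of the four theta constants of
the standard syzygetic quadruple equals `y₀y₁ + y₀y₂ + y₁y₂ − y₃y₄`. -/
theorem stmt_11 (Z : Matrix (Fin 2) (Fin 2) ℂ) (hZ : Z ∈ SiegelH2) :
    2 * theta ![0, 0] ![0, 1] Z ^ 2 * theta ![0, 0] ![0, 0] Z ^ 2 *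
        theta ![0, 0] ![1, 0] Z ^ 2 * theta ![0, 0] ![1, 1] Z ^ 2 =
      yg Z 0 * yg Z 1 + yg Z 0 * yg Z 2 + yg Z 1 * yg Z 2 - yg Z 3 * yg Z 4 := by
  have h4 : ∀ t : ℂ, t ^ 4 = (t ^ 2) ^ 2 := fun t => by ring
  simp only [yg, Matrix.cons_val_zero, Matrix.cons_val_one, Matrix.head_cons,
    Matrix.cons_val_two, Matrix.tail_cons, Matrix.cons_val_three, Matrix.cons_val_four,
    Matrix.head_fin_const]
  simp only [h4]
  rw [thA hZ, thB hZ, thC hZ, thD hZ, thP hZ, thQ hZ]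
  ring
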